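/- Let S be a finite set of intervals, k ≥ 0 an integer, and I a k-valid independent set of S. Suppose (A, B) is a proper alternating path with respect to I with |A| = t and |B| = t + 1 for some integer t with k < t ≤ 2k + 1. Then (I \ A) ∪ B is a k-valid independent set of S. -/

import Mathlib

open Finset

/-- A nonempty closed interval `[l, r]` on the real line. -/
structure Ivl where
  l : ℝ
  r : ℝ
  hle : l ≤ r

noncomputable instance : DecidableEq Ivl := Classical.decEq _

/-- Two closed intervals intersect (have a common point). -/
def Ivl.meets (x y : Ivl) : Prop := x.l ≤ y.r ∧ y.l ≤ x.r

/-- The interval `y` is strictly contained in the interval `x`. -/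
def Ivl.strictIn (y x : Ivl) : Prop := x.l < y.l ∧ y.r < x.r

/-- `I` is an independent set (a pairwise disjoint subset) of the interval set `S`. -/
def IsIndep (S I : Finset Ivl) : Prop :=
  I ⊆ S ∧ ∀ x ∈ I, ∀ y ∈ I, x ≠ y → ¬ Ivl.meets x y

/-- `α(S)`: the maximum cardinality of an independent set of `S`. -/
noncomputable def alphaIvl (S : Finset Ivl) : ℕ :=
  sSup {n : ℕ | ∃ I : Finset Ivl, IsIndep S I ∧ I.card = n}

/-- `I` is a `k`-maximal independent set of `S`. -/
def IsKMaximal (S : Finset Ivl) (k : ℕ) (I : Finset Ivl) : Prop :=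
  IsIndep S I ∧
  ∀ t, t ≤ k → ∀ A, A ⊆ I → ∀ B, B ⊆ S \ I →
    A.card = t → B.card = t + 1 → ¬ IsIndep S ((I \ A) ∪ B)

/-- `I` is a `k`-valid independent set of `S`: it is `k`-maximal and no interval of
`S \ I` is strictly contained in an interval of `I` (no-containment property). -/
def IsKValid (S : Finset Ivl) (k : ℕ) (I : Finset Ivl) : Prop :=
  IsKMaximal S k I ∧ ∀ y ∈ S \ I, ∀ x ∈ I, ¬ Ivl.strictIn y x

/-- `(A, B)` induces an alternating path with respect to `I`, witnessed by the
left-to-right orderings `a` of `A` and `b` of `B`: `(I \ A) ∪ B` is independent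
and in the intersection graph of `I ∪ B` the set `A ∪ B` induces exactly the path
`b 0, a 0, b 1, a 1, …, a (t-1), b t` (consecutive intervals of this sequence
intersect, all other pairs among `A ∪ B` are disjoint, and no interval of `I \ A`
intersects an interval of `B`). -/
def IsAltPathWith (S I A B : Finset Ivl) (t : ℕ)
    (a : Fin t → Ivl) (b : Fin (t + 1) → Ivl) : Prop :=
  A ⊆ I ∧ B ⊆ S \ I ∧ A.card = t ∧ B.card = t + 1 ∧
  IsIndep S ((I \ A) ∪ B) ∧
  (∀ i, a i ∈ A) ∧ (∀ i, b i ∈ B) ∧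
  Function.Injective a ∧ Function.Injective b ∧
  (∀ i j : Fin t, i < j → (a i).r < (a j).l) ∧
  (∀ i j : Fin (t + 1), i < j → (b i).r < (b j).l) ∧
  (∀ (i : Fin t) (j : Fin (t + 1)),
    Ivl.meets (a i) (b j) ↔ (j = i.castSucc ∨ j = i.succ)) ∧
  (∀ x ∈ I, x ∉ A → ∀ j : Fin (t + 1), ¬ Ivl.meets x (b j))

/-- `(A, B)` induces an alternating path with respect to `I`. -/
def IsAltPath (S I A B : Finset Ivl) : Prop :=
  ∃ t a b, IsAltPathWith S I A B t a b

/-- The alternating path `(A, B)` is smallest: no alternating path `(A', B')`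
with `A' ⊊ A`. -/
def IsSmallestAltPath (S I A B : Finset Ivl) : Prop :=
  IsAltPath S I A B ∧ ¬ ∃ A' B' : Finset Ivl, A' ⊂ A ∧ IsAltPath S I A' B'

/-- The leftmost right endpoint property for the alternating path with orderings
`a`, `b`: each `b (j+1)` has the leftmost right endpoint among all intervals of `S`
whose left endpoint lies in `[r (b j), r (a j)]`, and `b 0` has the leftmost right
endpoint among all intervals of `S` whose left endpoint lies in `[r a', r (a 0))`,
where `a'` is the interval of `I` immediately to the left of `a 0` (the range is
`(-∞, r (a 0))` if no such interval exists). -/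
def LREP (S I : Finset Ivl) (t : ℕ) (a : Fin t → Ivl) (b : Fin (t + 1) → Ivl) : Prop :=
  (∀ j : Fin t,
    ((b j.castSucc).r ≤ (b j.succ).l ∧ (b j.succ).l ≤ (a j).r) ∧
    ∀ y ∈ S, (b j.castSucc).r ≤ y.l → y.l ≤ (a j).r → (b j.succ).r ≤ y.r) ∧
  (∀ h : 0 < t,
    ((∀ x ∈ I, x.r < (a ⟨0, h⟩).l → x.r ≤ (b 0).l) ∧ (b 0).l < (a ⟨0, h⟩).r) ∧
    ∀ y ∈ S, (∀ x ∈ I, x.r < (a ⟨0, h⟩).l → x.r ≤ y.l) → y.l < (a ⟨0, h⟩).r →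
      (b 0).r ≤ y.r)

/-- The rightmost left endpoint property: the mirror image (exchanging the roles of
left and right) of the leftmost right endpoint property `LREP`. -/
def RLEP (S I : Finset Ivl) (t : ℕ) (a : Fin t → Ivl) (b : Fin (t + 1) → Ivl) : Prop :=
  (∀ j : Fin t,
    ((a j).l ≤ (b j.castSucc).r ∧ (b j.castSucc).r ≤ (b j.succ).l) ∧
    ∀ y ∈ S, (a j).l ≤ y.r → y.r ≤ (b j.succ).l → y.l ≤ (b j.castSucc).l) ∧
  (∀ h : 0 < t,
    ((a ⟨t - 1, Nat.sub_lt h Nat.one_pos⟩).l < (b (Fin.last t)).r ∧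
      (∀ x ∈ I, (a ⟨t - 1, Nat.sub_lt h Nat.one_pos⟩).r < x.l →
        (b (Fin.last t)).r ≤ x.l)) ∧
    ∀ y ∈ S, (a ⟨t - 1, Nat.sub_lt h Nat.one_pos⟩).l < y.r →
      (∀ x ∈ I, (a ⟨t - 1, Nat.sub_lt h Nat.one_pos⟩).r < x.l → y.r ≤ x.l) →
      y.l ≤ (b (Fin.last t)).l)

/-- A proper alternating path: a smallest alternating path satisfying the leftmost
right endpoint property. -/
def IsProperAltPath (S I A B : Finset Ivl) : Prop :=
  IsSmallestAltPath S I A B ∧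
  ∀ t a b, IsAltPathWith S I A B t a b → LREP S I t a b

/-- `B` is a left substitute of `A` (with respect to the `k`-valid independent set
`I` of `S`): `|B| = |A|`, the pair `(A, B)` cannot be extended to an alternating
path of sizes `t`, `t + 1` for any `t ≤ 2k`, and, writing `aj` for the rightmost
interval of `A`, if `aj` were not there then `(A \ {aj}, B)` would be a proper
alternating path. -/
def IsLeftSubstitute (S : Finset Ivl) (k : ℕ) (I A B : Finset Ivl) : Prop :=
  A ⊆ I ∧ B ⊆ S \ I ∧ B.card = A.card ∧
  (∀ t, t ≤ 2 * k → ¬ ∃ A'' B'' : Finset Ivl, A ⊆ A'' ∧ B ⊆ B'' ∧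
    A''.card = t ∧ B''.card = t + 1 ∧ IsAltPath S I A'' B'') ∧
  ∃ aj ∈ A, (∀ x ∈ A, x ≠ aj → x.r < aj.l) ∧
    IsProperAltPath (S.erase aj) (I.erase aj) (A.erase aj) B

/-- `B` is a right substitute of `A`: defined symmetrically to `IsLeftSubstitute`,
with the leftmost interval `a1` of `A` in place of the rightmost one. -/
def IsRightSubstitute (S : Finset Ivl) (k : ℕ) (I A B : Finset Ivl) : Prop :=
  A ⊆ I ∧ B ⊆ S \ I ∧ B.card = A.card ∧
  (∀ t, t ≤ 2 * k → ¬ ∃ A'' B'' : Finset Ivl, A ⊆ A'' ∧ B ⊆ B'' ∧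
    A''.card = t ∧ B''.card = t + 1 ∧ IsAltPath S I A'' B'') ∧
  ∃ a1 ∈ A, (∀ x ∈ A, x ≠ a1 → a1.r < x.l) ∧
    IsProperAltPath (S.erase a1) (I.erase a1) (A.erase a1) B


section Helpers

open Ivl

lemma meets_self (x : Ivl) : x.meets x := ⟨x.hle, x.hle⟩

lemma meets_symm {x y : Ivl} (h : x.meets y) : y.meets x := ⟨h.2, h.1⟩

lemma not_meets_cases {x y : Ivl} (h : ¬ x.meets y) : x.r < y.l ∨ y.r < x.l := by
  unfold Ivl.meets at h
  by_cases h1 : x.l ≤ y.r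
  · by_cases h2 : y.l ≤ x.r
    · exact absurd ⟨h1, h2⟩ h
    · exact Or.inl (by linarith)
  · exact Or.inr (by linarith)

lemma meets_of_pt {x y : Ivl} (p : ℝ) (h1 : x.l ≤ p) (h2 : p ≤ x.r)
    (h3 : y.l ≤ p) (h4 : p ≤ y.r) : x.meets y := ⟨le_trans h1 h4, le_trans h3 h2⟩

/-- If three pairwise "ordered-disjoint" intervals all meet `x`, the middle one is
strictly inside `x`. -/
lemma strictIn_mid {x y1 y2 y3 : Ivl} (h12 : y1.r < y2.l) (h23 : y2.r < y3.l)
    (m1 : x.meets y1) (m3 : x.meets y3) : y2.strictIn x :=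
  ⟨lt_of_le_of_lt m1.1 h12, lt_of_lt_of_le h23 m3.2⟩

lemma strictIn.meets' {x y : Ivl} (h : Ivl.strictIn y x) : x.meets y :=
  ⟨le_of_lt (lt_of_lt_of_le h.1 y.hle), le_of_lt (lt_of_le_of_lt y.hle h.2)⟩

lemma not_meets_of_strictIn {x y z : Ivl} (h : Ivl.strictIn y x) (hz : ¬ z.meets x) :
    ¬ z.meets y := by
  intro hm
  obtain ⟨hxy, hyx⟩ := h
  obtain ⟨hm1, hm2⟩ := hm
  rcases not_meets_cases hz with h1 | h1
  · -- z.r < x.l < y.l but meets z y needs y.l ≤ z.r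
    linarith
  · -- x.r < z.l, y.r < x.r, but meets z y needs z.l ≤ y.r
    linarith


/-- Reachability in the "meets" graph restricted to a finite vertex set. -/
def ReachRel (V : Finset Ivl) (u v : Ivl) : Prop := u ∈ V ∧ v ∈ V ∧ u.meets v

def Reach (V : Finset Ivl) : Ivl → Ivl → Prop := Relation.ReflTransGen (ReachRel V)

lemma reach_refl {V : Finset Ivl} (u : Ivl) : Reach V u u := Relation.ReflTransGen.refl

lemma reach_trans {V : Finset Ivl} {u v w : Ivl} (h1 : Reach V u v) (h2 : Reach V v w) :
    Reach V u w := Relation.ReflTransGen.trans h1 h2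

lemma reach_symm {V : Finset Ivl} {u v : Ivl} (h : Reach V u v) : Reach V v u := by
  induction h with
  | refl => exact Relation.ReflTransGen.refl
  | tail _ hrel ih =>
    exact reach_trans (Relation.ReflTransGen.single ⟨hrel.2.1, hrel.1, meets_symm hrel.2.2⟩) ih

lemma reach_step {V : Finset Ivl} {u v w : Ivl} (h : Reach V u v) (hv : v ∈ V) (hw : w ∈ V)
    (hm : v.meets w) : Reach V u w := Relation.ReflTransGen.tail h ⟨hv, hw, hm⟩

/-- Along a walk in the meets graph, every point between `u.r` and `v.l`
is covered by some vertex reachable from `u`. -/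
lemma reach_cover {V : Finset Ivl} {u v : Ivl} (h : Reach V u v) (hu : u ∈ V) :
    ∀ p : ℝ, u.r ≤ p → p ≤ v.l → ∃ w, Reach V u w ∧ w ∈ V ∧ w.l ≤ p ∧ p ≤ w.r := by
  induction h with
  | refl =>
    intro p h1 h2
    exact ⟨u, reach_refl u, hu, le_trans u.hle h1, le_trans h2 u.hle⟩
  | @tail v' v'' hr hrel ih =>
    intro p h1 h2
    by_cases hc : p ≤ v'.l
    · exact ih p h1 hc
    · push_neg at hc
      by_cases hc2 : p ≤ v'.r
      · exact ⟨v', hr, hrel.1, le_of_lt hc, hc2⟩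
      · push_neg at hc2
        -- v'' meets v' : v''.l ≤ v'.r < p ≤ v''.l, contradiction
        have := hrel.2.2.2  -- v''.l ≤ v'.r
        linarith


/-- If a family `C` covers `[aa, bb]` and `w0 ∈ C` covers `aa` but not `bb`,
then some other member overlapping `w0` extends strictly beyond `w0.r`. -/
lemma interval_cross {C : Finset Ivl} {aa bb : ℝ} (hab : aa ≤ bb)
    (hcov : ∀ p : ℝ, aa ≤ p → p ≤ bb → ∃ w ∈ C, w.l ≤ p ∧ p ≤ w.r)
    {w0 : Ivl} (h0l : w0.l ≤ aa) (h0r : aa ≤ w0.r) :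
    bb ≤ w0.r ∨ ∃ w ∈ C, w0.r < w.r ∧ w.meets w0 := by
  by_cases hbr : bb ≤ w0.r
  · exact Or.inl hbr
  push_neg at hbr
  right
  set T : Finset Ivl := C.filter (fun w => w0.r < w.l) with hT
  have key : ∀ w ∈ C, (∀ u ∈ T, w.l < u.l) → w.l ≤ w0.r := by
    intro w hw hall
    by_contra hcon
    push_neg at hcon
    have : w ∈ T := by simp [hT, hw, hcon]
    exact absurd (hall w this) (lt_irrefl _)
  by_cases hTe : T = ∅
  · obtain ⟨w, hwC, hwl, hwr⟩ := hcov bb hab le_rfl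
    have hwl2 : w.l ≤ w0.r := by
      by_contra hcon; push_neg at hcon
      have : w ∈ T := by simp [hT, hwC, hcon]
      simp [hTe] at this
    refine ⟨w, hwC, lt_of_lt_of_le hbr hwr, hwl2, by linarith⟩
  · have hTne : T.Nonempty := Finset.nonempty_iff_ne_empty.mpr hTe
    set q : ℝ := (T.image Ivl.l).min' (hTne.image _) with hq
    have hql : w0.r < q := by
      have := (T.image Ivl.l).min'_mem (hTne.image _)
      rw [← hq] at this
      obtain ⟨u, huT, hul⟩ := Finset.mem_image.mp this
      have := (Finset.mem_filter.mp huT).2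
      linarith [hul ▸ this]
    have hqmin : ∀ w ∈ C, w.l < q → w.l ≤ w0.r := by
      intro w hw hwq
      by_contra hcon; push_neg at hcon
      have hwT : w ∈ T := by simp [hT, hw, hcon]
      have : q ≤ w.l := Finset.min'_le _ _ (Finset.mem_image_of_mem _ hwT)
      linarith
    set m : ℝ := min ((w0.r + q)/2) bb with hm
    have hm1 : aa ≤ m := le_min (by linarith) hab
    have hm2 : m ≤ bb := min_le_right _ _
    have hm3 : w0.r < m := lt_min (by linarith) hbr
    have hm4 : m < q := lt_of_le_of_lt (min_le_left _ _) (by linarith)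
    obtain ⟨w, hwC, hwl, hwr⟩ := hcov m hm1 hm2
    have hwl2 : w.l ≤ w0.r := hqmin w hwC (lt_of_le_of_lt hwl hm4)
    exact ⟨w, hwC, by linarith, hwl2, by linarith⟩


/-- A pairwise disjoint finite family of intervals can be enumerated in
left-to-right order. -/
lemma exists_sorted_enum (Y : Finset Ivl) (n : ℕ) (hn : Y.card = n)
    (hdisj : ∀ x ∈ Y, ∀ y ∈ Y, x ≠ y → ¬ x.meets y) :
    ∃ c : Fin n → Ivl, (∀ i, c i ∈ Y) ∧ (∀ i j : Fin n, i < j → (c i).r < (c j).l) ∧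
      Function.Injective c ∧ ∀ y ∈ Y, ∃ i, c i = y := by
  have hlinj : Set.InjOn Ivl.l Y := by
    intro x hx y hy hxy
    by_contra hne
    exact hdisj x hx y hy hne ⟨le_trans (le_of_eq hxy) y.hle, le_trans (le_of_eq hxy.symm) x.hle⟩
  have hLcard : (Y.image Ivl.l).card = n := by
    rw [Finset.card_image_of_injOn hlinj, hn]
  set φ := (Y.image Ivl.l).orderIsoOfFin hLcard with hφ
  have hmem : ∀ i : Fin n, ((φ i : ℝ)) ∈ Y.image Ivl.l := fun i => (φ i).2
  choose c hcY hcl using fun i => Finset.mem_image.mp (hmem i)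
  have horder : ∀ i j : Fin n, i < j → (c i).r < (c j).l := by
    intro i j hij
    have hl : (c i).l < (c j).l := by
      have := φ.strictMono hij
      rw [← Subtype.coe_lt_coe] at this
      rw [← hcl i, ← hcl j] at this
      exact this
    have hne : c i ≠ c j := fun h => by rw [h] at hl; exact lt_irrefl _ hl
    rcases not_meets_cases (hdisj _ (hcY i) _ (hcY j) hne) with h | h
    · exact h
    · exfalso; linarith [(c i).hle, (c j).hle]
  have hinj : Function.Injective c := by
    intro i j hij
    by_contra hne
    rcases lt_or_gt_of_ne hne with h | h
    · have := horder i j h; rw [hij] at this; linarith [(c j).hle]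
    · have := horder j i h; rw [hij] at this; linarith [(c j).hle]
  have hsurj : ∀ y ∈ Y, ∃ i, c i = y := by
    have himg : Finset.image c Finset.univ = Y := by
      apply Finset.eq_of_subset_of_card_le
      · intro z hz
        obtain ⟨i, _, rfl⟩ := Finset.mem_image.mp hz
        exact hcY i
      · rw [hn, Finset.card_image_of_injective _ hinj, Finset.card_univ, Fintype.card_fin]
    intro y hy
    rw [← himg] at hy
    obtain ⟨i, _, hi⟩ := Finset.mem_image.mp hy
    exact ⟨i, hi⟩
  exact ⟨c, hcY, horder, hinj, hsurj⟩


/-- Path extraction: a "+1 exchange set" in which every removed interval meets two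
added intervals is automatically an alternating path. -/
lemma path_extraction (S I X Y : Finset Ivl)
    (hIind : IsIndep S I)
    (hnc : ∀ y ∈ S \ I, ∀ x ∈ I, ¬ Ivl.strictIn y x)
    (hX : X ⊆ I) (hY : Y ⊆ S \ I)
    (hcard : Y.card = X.card + 1)
    (hindep : IsIndep S ((I \ X) ∪ Y))
    (hsep : ∀ x ∈ I, x ∉ X → ∀ y ∈ Y, ¬ x.meets y)
    (hdeg : ∀ x ∈ X, ∃ y1 ∈ Y, ∃ y2 ∈ Y, y1 ≠ y2 ∧ x.meets y1 ∧ x.meets y2) :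
    IsAltPath S I X Y := by
  set n := X.card with hn
  have hYdisj : ∀ y1 ∈ Y, ∀ y2 ∈ Y, y1 ≠ y2 → ¬ y1.meets y2 := by
    intro y1 h1 y2 h2 hne
    exact hindep.2 y1 (Finset.mem_union_right _ h1) y2 (Finset.mem_union_right _ h2) hne
  obtain ⟨c, hcY, hco, hcinj, hcsurj⟩ := exists_sorted_enum Y (n+1) hcard hYdisj
  have hXI : ∀ x ∈ X, x ∈ I := fun x hx => hX hx
  -- no x meets three of the c's
  have hmeets2 : ∀ x ∈ X, ∀ i j k : Fin (n+1), i < j → j < k →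
      x.meets (c i) → x.meets (c k) → False := by
    intro x hx i j k hij hjk m1 m3
    exact hnc (c j) (hY (hcY j)) x (hXI x hx)
      (strictIn_mid (hco i j hij) (hco j k hjk) m1 m3)
  -- every x ∈ X meets two consecutive c's
  have hgap : ∀ x ∈ X, ∃ i : Fin n, x.meets (c i.castSucc) ∧ x.meets (c i.succ) := by
    intro x hx
    obtain ⟨y1, hy1, y2, hy2, hne, m1, m2⟩ := hdeg x hx
    obtain ⟨i1, rfl⟩ := hcsurj y1 hy1
    obtain ⟨i2, rfl⟩ := hcsurj y2 hy2
    have key : ∀ i1 i2 : Fin (n+1), i1 < i2 → x.meets (c i1) → x.meets (c i2) →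
        ∃ i : Fin n, x.meets (c i.castSucc) ∧ x.meets (c i.succ) := by
      intro i1 i2 h12 m1 m2
      have hi1n : (i1 : ℕ) < n := lt_of_lt_of_le h12 (Nat.lt_succ_iff.mp i2.isLt)
      have hcs : (⟨(i1 : ℕ), hi1n⟩ : Fin n).castSucc = i1 := by
        ext; simp
      have hsc : ((⟨(i1 : ℕ), hi1n⟩ : Fin n).succ : Fin (n+1)) = ⟨(i1 : ℕ) + 1, by omega⟩ := by
        ext; simp
      refine ⟨⟨(i1 : ℕ), hi1n⟩, by rw [hcs]; exact m1, ?_⟩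
      rw [hsc]
      by_cases hcase : (i2 : ℕ) = (i1 : ℕ) + 1
      · have : (⟨(i1 : ℕ) + 1, by omega⟩ : Fin (n+1)) = i2 := by ext; simp [hcase]
        rw [this]; exact m2
      · have h1 : i1 < (⟨(i1 : ℕ) + 1, by omega⟩ : Fin (n+1)) := by
          rw [Fin.lt_def]; simp
        have h2 : (⟨(i1 : ℕ) + 1, by omega⟩ : Fin (n+1)) < i2 := by
          rw [Fin.lt_def]; simp; rw [Fin.lt_def] at h12; omega
        have o1 := hco i1 _ h1
        have o2 := hco _ i2 h2
        exact ⟨by linarith [m1.1, (c ⟨(i1 : ℕ) + 1, by omega⟩ : Ivl).hle],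
          by linarith [m2.2, (c ⟨(i1 : ℕ) + 1, by omega⟩ : Ivl).hle]⟩
    rcases lt_or_gt_of_ne (fun h : i1 = i2 => hne (congrArg c h)) with h | h
    · exact key i1 i2 h m1 m2
    · exact key i2 i1 h m2 m1
  -- gap uniqueness: an x cannot link two different gaps
  have hgapuniq : ∀ x ∈ X, ∀ i j : Fin n,
      x.meets (c i.castSucc) → x.meets (c i.succ) →
      x.meets (c j.castSucc) → x.meets (c j.succ) → i = j := by
    intro x hx i j mi1 mi2 mj1 mj2
    by_contra hne
    rcases lt_or_gt_of_ne hne with h | h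
    · have hval : (i : ℕ) < (j : ℕ) := h
      exact hmeets2 x hx i.castSucc i.succ j.succ (Fin.castSucc_lt_succ (i := i))
        (by rw [Fin.lt_def]; simp only [Fin.val_succ]; omega) mi1 mj2
    · have hval : (j : ℕ) < (i : ℕ) := h
      exact hmeets2 x hx j.castSucc j.succ i.succ (Fin.castSucc_lt_succ (i := j))
        (by rw [Fin.lt_def]; simp only [Fin.val_succ]; omega) mj1 mi2
  -- linker uniqueness: each gap has at most one linker
  have hlinkuniq : ∀ x1 ∈ X, ∀ x2 ∈ X, ∀ i : Fin n,
      x1.meets (c i.castSucc) → x1.meets (c i.succ) →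
      x2.meets (c i.castSucc) → x2.meets (c i.succ) → x1 = x2 := by
    intro x1 h1 x2 h2 i m11 m12 m21 m22
    by_contra hne
    have hpt : ∀ x : Ivl, x.meets (c i.castSucc) → x.meets (c i.succ) →
        x.l ≤ (c i.castSucc).r ∧ (c i.castSucc).r ≤ x.r := by
      intro x mA mB
      refine ⟨mA.1, ?_⟩
      have := hco i.castSucc i.succ (Fin.castSucc_lt_succ (i := i))
      linarith [mB.2]
    obtain ⟨p1, p2⟩ := hpt x1 m11 m12
    obtain ⟨q1, q2⟩ := hpt x2 m21 m22
    exact hIind.2 x1 (hXI x1 h1) x2 (hXI x2 h2) hne (meets_of_pt _ p1 p2 q1 q2)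
  choose g hg1 hg2 using hgap
  -- surjectivity of the gap assignment
  have hsurj : ∀ i : Fin n, ∃ x, ∃ hx : x ∈ X, g x hx = i := by
    have himg : X.attach.image (fun p => g p.1 p.2) = Finset.univ := by
      apply Finset.eq_of_subset_of_card_le (Finset.subset_univ _)
      rw [Finset.card_univ, Fintype.card_fin]
      rw [Finset.card_image_of_injOn, Finset.card_attach]
      intro p hp q hq hpq
      dsimp only at hpq
      have := hlinkuniq p.1 p.2 q.1 q.2 (g p.1 p.2) (hg1 p.1 p.2) (hg2 p.1 p.2)
        (by rw [hpq]; exact hg1 q.1 q.2) (by rw [hpq]; exact hg2 q.1 q.2)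
      exact Subtype.ext this
    intro i
    have : i ∈ X.attach.image (fun p => g p.1 p.2) := by
      rw [himg]; exact Finset.mem_univ i
    obtain ⟨p, _, hp⟩ := Finset.mem_image.mp this
    exact ⟨p.1, p.2, hp⟩
  choose a ha1 ha2 using hsurj
  have haX : ∀ i, a i ∈ X := ha1
  have halink1 : ∀ i : Fin n, (a i).meets (c i.castSucc) := by
    intro i
    have := hg1 (a i) (ha1 i)
    rwa [ha2 i] at this
  have halink2 : ∀ i : Fin n, (a i).meets (c i.succ) := by
    intro i
    have := hg2 (a i) (ha1 i)
    rwa [ha2 i] at this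
  have hainj : Function.Injective a := by
    intro i j hij
    exact hgapuniq (a i) (ha1 i) i j (halink1 i) (halink2 i)
      (by rw [hij]; exact halink1 j) (by rw [hij]; exact halink2 j)
  -- meets-iff
  have hiff : ∀ (i : Fin n) (j : Fin (n+1)),
      (a i).meets (c j) ↔ (j = i.castSucc ∨ j = i.succ) := by
    intro i j
    constructor
    · intro hm
      by_contra hcon
      push_neg at hcon
      obtain ⟨hne1, hne2⟩ := hcon
      have hj : (j : ℕ) < (i : ℕ) ∨ (i : ℕ) + 2 ≤ (j : ℕ) := by
        have e1 : (j : ℕ) ≠ (i : ℕ) := fun h => hne1 (by ext; simp [h])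
        have e2 : (j : ℕ) ≠ (i : ℕ) + 1 := fun h => hne2 (by ext; simp [h])
        omega
      rcases hj with h | h
      · exact hmeets2 (a i) (ha1 i) j i.castSucc i.succ
          (by rw [Fin.lt_def]; simpa using h) (Fin.castSucc_lt_succ (i := i)) hm (halink2 i)
      · exact hmeets2 (a i) (ha1 i) i.castSucc i.succ j (Fin.castSucc_lt_succ (i := i))
          (by rw [Fin.lt_def]; simp; omega) (halink1 i) hm
    · rintro (rfl | rfl)
      · exact halink1 i
      · exact halink2 i
  -- order on a
  have haord : ∀ i j : Fin n, i < j → (a i).r < (a j).l := by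
    intro i j hij
    have hne : a i ≠ a j := fun h => absurd (hainj h) (ne_of_lt hij)
    rcases not_meets_cases (hIind.2 (a i) (hXI _ (ha1 i)) (a j) (hXI _ (ha1 j)) hne) with h | h
    · exact h
    · exfalso
      have o1 : (c i.castSucc).r < (c j.succ).l := by
        apply hco
        rw [Fin.lt_def]; simp; rw [Fin.lt_def] at hij; omega
      linarith [(halink1 i).1, (halink2 j).2]
  exact ⟨n, a, c, hX, hY, rfl, hcard, hindep, ha1, (fun i => hcY i), hainj, hcinj,
    haord, hco, hiff, fun x hx hnx j => hsep x hx hnx (c j) (hcY j)⟩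


lemma reach_mem_right {V : Finset Ivl} {u v : Ivl} (h : Reach V u v) (hu : u ∈ V) : v ∈ V := by
  induction h with
  | refl => exact hu
  | tail _ hrel _ => exact hrel.2.1

/-- In any connected component of the exchange graph there is at most one more
`Bt`-interval than `At`-intervals; in case of equality every `At`-interval of the
component meets two `Bt`-intervals of the component. -/
lemma comp_surplus (S I At Bt C : Finset Ivl) (hIind : IsIndep S I)
    (hnc : ∀ y ∈ S \ I, ∀ x ∈ I, ¬ Ivl.strictIn y x)
    (hAtI : At ⊆ I) (hBtSI : Bt ⊆ S \ I)
    (hBtdisj : ∀ y1 ∈ Bt, ∀ y2 ∈ Bt, y1 ≠ y2 → ¬ y1.meets y2)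
    (hCsub : C ⊆ At ∪ Bt)
    (hCconn : ∀ u ∈ C, ∀ v ∈ C, Reach (At ∪ Bt) u v)
    (hCreach : ∀ u ∈ C, ∀ v, Reach (At ∪ Bt) u v → v ∈ C) :
    (C ∩ Bt).card ≤ (C ∩ At).card + 1 ∧
    ((C ∩ Bt).card = (C ∩ At).card + 1 → ∀ x ∈ C ∩ At,
      ∃ y1 ∈ C ∩ Bt, ∃ y2 ∈ C ∩ Bt, y1 ≠ y2 ∧ x.meets y1 ∧ x.meets y2) := by
  classical
  set m := (C ∩ Bt).card with hm
  obtain ⟨c, hcY, hco, hcinj, hcsurj⟩ := exists_sorted_enum (C ∩ Bt) m rfl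
    (fun y1 h1 y2 h2 hne => hBtdisj y1 (Finset.mem_inter.mp h1).2 y2 (Finset.mem_inter.mp h2).2 hne)
  have hcC : ∀ i, c i ∈ C := fun i => (Finset.mem_inter.mp (hcY i)).1
  have hcB : ∀ i, c i ∈ Bt := fun i => (Finset.mem_inter.mp (hcY i)).2
  -- each consecutive pair of the component's Bt-intervals is linked by an At-interval
  have hlink : ∀ i j : Fin m, (j : ℕ) = (i : ℕ) + 1 →
      ∃ x ∈ C ∩ At, x.meets (c i) ∧ x.meets (c j) := by
    intro i j hij
    have hilt : i < j := by rw [Fin.lt_def]; omega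
    have hab : (c i).r < (c j).l := hco i j hilt
    have hcov : ∀ p : ℝ, (c i).r ≤ p → p ≤ (c j).l → ∃ w ∈ C, w.l ≤ p ∧ p ≤ w.r := by
      intro p h1 h2
      obtain ⟨w, hw1, hw2, hw3, hw4⟩ :=
        reach_cover (hCconn (c i) (hcC i) (c j) (hcC j)) (hCsub (hcC i)) p h1 h2
      exact ⟨w, hCreach (c i) (hcC i) w hw1, hw3, hw4⟩
    rcases interval_cross (le_of_lt hab) hcov ((c i).hle) le_rfl with h | ⟨w1, hw1C, hw1r, hw1m⟩
    · linarith
    have hw1At : w1 ∈ At := by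
      rcases Finset.mem_union.mp (hCsub hw1C) with h | h
      · exact h
      · exfalso
        have hne : w1 ≠ c i := fun he => by rw [he] at hw1r; exact lt_irrefl _ hw1r
        exact hBtdisj w1 h (c i) (hcB i) hne hw1m
    have hw1l : w1.l ≤ (c i).r := hw1m.1
    rcases interval_cross (le_of_lt hab) hcov hw1l (le_of_lt hw1r) with h | ⟨w2, hw2C, hw2r, hw2m⟩
    · exact ⟨w1, Finset.mem_inter.mpr ⟨hw1C, hw1At⟩,
        hw1m, ⟨by linarith [(c j).hle], h⟩⟩
    rcases Finset.mem_union.mp (hCsub hw2C) with h2 | h2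
    · -- two At intervals meet : contradiction
      exfalso
      have hne : w2 ≠ w1 := fun he => by rw [he] at hw2r; exact lt_irrefl _ hw2r
      exact hIind.2 w2 (hAtI h2) w1 (hAtI hw1At) hne hw2m
    · -- w2 is one of the c's
      obtain ⟨j2, rfl⟩ := hcsurj w2 (Finset.mem_inter.mpr ⟨hw2C, h2⟩)
      have hj2i : i < j2 := by
        rcases lt_trichotomy i j2 with h | h | h
        · exact h
        · exfalso; subst h; linarith
        · exfalso
          have := hco j2 i h
          linarith [(c i).hle]
      by_cases hj2 : j2 = j
      · subst hj2
        exact ⟨w1, Finset.mem_inter.mpr ⟨hw1C, hw1At⟩, hw1m, meets_symm hw2m⟩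
      · have hjj2 : j < j2 := by
          rw [Fin.lt_def]
          rw [Fin.lt_def] at hj2i
          have : (j2 : ℕ) ≠ (j : ℕ) := fun he => hj2 (Fin.ext he)
          omega
        have h1 := hco j j2 hjj2
        refine ⟨w1, Finset.mem_inter.mpr ⟨hw1C, hw1At⟩, hw1m, ?_, ?_⟩
        · linarith [(c j).hle]
        · linarith [hw2m.1, (c j).hle]
  -- injective choice of linkers
  have hlink2 : ∀ i : Fin (m - 1), ∃ x, x ∈ C ∩ At ∧
      x.meets (c ⟨(i : ℕ), by omega⟩) ∧ x.meets (c ⟨(i : ℕ) + 1, by omega⟩) := by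
    intro i
    obtain ⟨x, hx1, hx2, hx3⟩ := hlink ⟨(i : ℕ), by omega⟩ ⟨(i : ℕ) + 1, by omega⟩ rfl
    exact ⟨x, hx1, hx2, hx3⟩
  choose f hf1 hf2 hf3 using hlink2
  have hfinj : Function.Injective f := by
    intro i j hij
    by_contra hne
    have hkey : ∀ i j : Fin (m-1), (i : ℕ) < (j : ℕ) → f i = f j → False := by
      intro i j hlt hfe
      have m1 := hf2 i
      have m3 := hf3 j
      rw [hfe] at m1
      have o1 : (c ⟨(i : ℕ), by omega⟩).r < (c ⟨(i : ℕ) + 1, by omega⟩).l := by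
        apply hco; rw [Fin.lt_def]; simp
      have o2 : (c ⟨(i : ℕ) + 1, by omega⟩).r < (c ⟨(j : ℕ) + 1, by omega⟩).l := by
        apply hco; rw [Fin.lt_def]; simp; omega
      have hmid := strictIn_mid o1 o2 m1 m3
      exact hnc _ (hBtSI (hcB ⟨(i : ℕ) + 1, by omega⟩)) (f j)
        (hAtI (Finset.mem_inter.mp (hf1 j)).2) hmid
    rcases lt_trichotomy ((i : ℕ)) ((j : ℕ)) with h | h | h
    · exact hkey i j h hij
    · exact hne (Fin.ext h)
    · exact hkey j i h hij.symm
  have hcount : m - 1 ≤ (C ∩ At).card := by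
    have := Finset.card_le_card_of_injOn (s := (Finset.univ : Finset (Fin (m-1)))) f
      (fun i _ => hf1 i) (fun i _ j _ h => hfinj h)
    simpa using this
  constructor
  · omega
  · intro heq x hx
    -- the linker map is surjective onto C ∩ At
    have himg : Finset.image f Finset.univ = C ∩ At := by
      apply Finset.eq_of_subset_of_card_le
      · intro z hz
        obtain ⟨i, _, rfl⟩ := Finset.mem_image.mp hz
        exact hf1 i
      · rw [Finset.card_image_of_injective _ hfinj, Finset.card_univ, Fintype.card_fin]
        omega
    rw [← himg] at hx
    obtain ⟨i, _, rfl⟩ := Finset.mem_image.mp hx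
    refine ⟨c ⟨(i : ℕ), by omega⟩, hcY _, c ⟨(i : ℕ) + 1, by omega⟩, hcY _, ?_, hf2 i, hf3 i⟩
    intro h
    have := hcinj h
    have := congrArg Fin.val this
    simp at this

end Helpers

/-- If `I` is a `k`-valid independent set of `S` and `(A, B)` is a proper
alternating path with `|A| = t`, `|B| = t + 1` for some `k < t ≤ 2k + 1`, then
`(I \ A) ∪ B` is a `k`-valid independent set of `S`. -/
theorem stmt5 (S : Finset Ivl) (k : ℕ) (I : Finset Ivl) (hI : IsKValid S k I)
    (A B : Finset Ivl) (t : ℕ) (hAcard : A.card = t) (hBcard : B.card = t + 1)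
    (hkt : k < t) (ht : t ≤ 2 * k + 1)
    (hp : IsProperAltPath S I A B) :
    IsKValid S k ((I \ A) ∪ B) := by
  classical
  obtain ⟨⟨hpath, hsmall⟩, hlrep0⟩ := hp
  obtain ⟨t₀, a, b, hw⟩ := hpath
  have ht0 : t = t₀ := by rw [← hAcard]; exact hw.2.2.1
  subst ht0
  have hlrep := hlrep0 t a b hw
  obtain ⟨hAI, hBS, hAc, hBc, hI'ind, haA, hbB, hainj, hbinj, haord, hbord, hiff, hsepIA⟩ := hw
  set I' : Finset Ivl := (I \ A) ∪ B with hI'def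
  have hIind : IsIndep S I := hI.1.1
  have hImax := hI.1.2
  have hInc := hI.2
  have htpos : 0 < t := lt_of_le_of_lt (Nat.zero_le k) hkt
  have hbnI : ∀ j, b j ∉ I := fun j => (Finset.mem_sdiff.mp (hBS (hbB j))).2
  have hbS : ∀ j, b j ∈ S := fun j => (Finset.mem_sdiff.mp (hBS (hbB j))).1
  have haI : ∀ i, a i ∈ I := fun i => hAI (haA i)
  have haS : ∀ i, a i ∈ S := fun i => hIind.1 (haI i)
  have hm1 : ∀ i : Fin t, (a i).meets (b i.castSucc) := fun i => (hiff i _).mpr (Or.inl rfl)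
  have hm2 : ∀ i : Fin t, (a i).meets (b i.succ) := fun i => (hiff i _).mpr (Or.inr rfl)
  have hasurj : ∀ x ∈ A, ∃ i, a i = x := by
    have himg : Finset.image a Finset.univ = A := by
      apply Finset.eq_of_subset_of_card_le
      · intro z hz; obtain ⟨i, _, rfl⟩ := Finset.mem_image.mp hz; exact haA i
      · rw [hAcard, Finset.card_image_of_injective _ hainj, Finset.card_univ, Fintype.card_fin]
    intro x hx
    rw [← himg] at hx
    obtain ⟨i, _, hi⟩ := Finset.mem_image.mp hx
    exact ⟨i, hi⟩
  have hbsurj : ∀ y ∈ B, ∃ j, b j = y := by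
    have himg : Finset.image b Finset.univ = B := by
      apply Finset.eq_of_subset_of_card_le
      · intro z hz; obtain ⟨i, _, rfl⟩ := Finset.mem_image.mp hz; exact hbB i
      · rw [hBc, Finset.card_image_of_injective _ hbinj, Finset.card_univ, Fintype.card_fin]
    intro y hy
    rw [← himg] at hy
    obtain ⟨j, _, hj⟩ := Finset.mem_image.mp hy
    exact ⟨j, hj⟩
  have hBS' : B ⊆ S := fun y hy => (Finset.mem_sdiff.mp (hBS hy)).1
  have hAnB : ∀ x ∈ A, x ∉ B := fun x hx hxB => (Finset.mem_sdiff.mp (hBS hxB)).2 (hAI hx)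
  have hB_I' : B ⊆ I' := fun y hy => Finset.mem_union_right _ hy
  have hInA_I' : I \ A ⊆ I' := fun x hx => Finset.mem_union_left _ hx
  have hA_nI' : ∀ x ∈ A, x ∉ I' := by
    intro x hx hx'
    rcases Finset.mem_union.mp hx' with h | h
    · exact (Finset.mem_sdiff.mp h).2 hx
    · exact hAnB x hx h
  have hI'S : I' ⊆ S := hI'ind.1
  have hbltlt : ∀ i j : Fin (t+1), i ≤ j → (b i).l ≤ (b j).l ∧ (b i).r ≤ (b j).r := by
    intro i j hij
    rcases eq_or_lt_of_le hij with rfl | h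
    · exact ⟨le_rfl, le_rfl⟩
    · have := hbord i j h
      exact ⟨by linarith [(b i).hle], by linarith [(b j).hle]⟩
  -- span lemma : intervals of I \ A lie outside [b 0 .l, b last .r]
  have hspan : ∀ x ∈ I, x ∉ A → x.r < (b 0).l ∨ (b (Fin.last t)).r < x.l := by
    intro x hxI hxA
    by_cases hc : x.r < (b 0).l
    · exact Or.inl hc
    right
    push_neg at hc
    have h0 : (b 0).r < x.l := by
      rcases not_meets_cases (hsepIA x hxI hxA 0) with h | h
      · linarith
      · exact h
    have hstep : ∀ m : ℕ, ∀ hm : m < t + 1, (b ⟨m, hm⟩).r < x.l := by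
      intro m
      induction m with
      | zero =>
        intro hm
        have : (⟨0, hm⟩ : Fin (t+1)) = 0 := rfl
        rw [this]; exact h0
      | succ m ih =>
        intro hm
        have hmt : m < t := by omega
        have hbm := ih (by omega)
        have hma : (a ⟨m, hmt⟩).r < x.l := by
          have hne : x ≠ a ⟨m, hmt⟩ := by
            intro h; exact hxA (h ▸ haA ⟨m, hmt⟩)
          rcases not_meets_cases (hIind.2 x hxI (a ⟨m, hmt⟩) (haI ⟨m, hmt⟩) hne) with h | h
          · exfalso
            have h1 := (hm1 ⟨m, hmt⟩).1
            have hcs : (⟨m, hmt⟩ : Fin t).castSucc = ⟨m, by omega⟩ := rfl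
            rw [hcs] at h1
            linarith [x.hle]
          · exact h
        rcases not_meets_cases (hsepIA x hxI hxA ⟨m + 1, hm⟩) with h | h
        · exfalso
          have h2 := (hm2 ⟨m, hmt⟩).2
          have hsc : (⟨m, hmt⟩ : Fin t).succ = ⟨m + 1, hm⟩ := rfl
          rw [hsc] at h2
          linarith [x.hle]
        · exact h
    have := hstep t (by omega)
    have hlast : (Fin.last t) = ⟨t, by omega⟩ := rfl
    rw [hlast]
    exact this
  -- Part C : no-containment for I'
  have hnc' : ∀ y ∈ S \ I', ∀ x ∈ I', ¬ Ivl.strictIn y x := by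
    intro y hy x hx hsin
    obtain ⟨hyS, hynI'⟩ := Finset.mem_sdiff.mp hy
    rcases Finset.mem_union.mp hx with hxIA | hxB
    · -- x ∈ I \ A
      obtain ⟨hxI, hxA⟩ := Finset.mem_sdiff.mp hxIA
      by_cases hyI : y ∈ I
      · have hyA : y ∈ A := by
          by_contra hyA
          exact hynI' (hInA_I' (Finset.mem_sdiff.mpr ⟨hyI, hyA⟩))
        have hne : x ≠ y := by
          rintro rfl
          exact lt_irrefl _ hsin.1
        exact hIind.2 x hxI y hyI hne (strictIn.meets' hsin)
      · exact hInc y (Finset.mem_sdiff.mpr ⟨hyS, hyI⟩) x hxI hsin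
    · -- x = b j
      obtain ⟨j, rfl⟩ := hbsurj x hxB
      have hynB : y ∉ B := fun hyB => hynI' (hB_I' hyB)
      by_cases hyI : y ∈ I
      · -- y ∈ A, y = a m strictly inside b j : contradiction with LREP
        have hyA : y ∈ A := by
          by_contra hyA
          exact hynI' (hInA_I' (Finset.mem_sdiff.mpr ⟨hyI, hyA⟩))
        obtain ⟨m, rfl⟩ := hasurj y hyA
        have hmeets : (a m).meets (b j) :=
          ⟨le_trans (a m).hle (le_of_lt hsin.2), le_trans (le_of_lt hsin.1) (a m).hle⟩
        rcases (hiff m j).mp hmeets with rfl | rfl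
        · have h1 := (hlrep.1 m).1.1
          have h2 := (hlrep.1 m).1.2
          linarith [hsin.2]
        · have h1 := (hlrep.1 m).1.1
          have h2 := (hm1 m).1
          linarith [hsin.1]
      · -- y ∈ S \ I strictly inside b j
        have hySI : y ∈ S \ I := Finset.mem_sdiff.mpr ⟨hyS, hyI⟩
        have hyIA : ∀ x' ∈ I, x' ∉ A → ¬ x'.meets y :=
          fun x' h1 h2 => not_meets_of_strictIn hsin (hsepIA x' h1 h2 j)
        have hKb : ∀ m : Fin (t+1), m ≠ j → ¬ (b m).meets y := by
          intro m hm
          apply not_meets_of_strictIn hsin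
          exact hI'ind.2 (b m) (hB_I' (hbB m)) (b j) (hB_I' (hbB j))
            (fun h => hm (hbinj h))
        rcases Fin.eq_zero_or_eq_succ j with rfl | ⟨i, rfl⟩
        · -- j = 0
          by_cases hcase : y.l < (a ⟨0, htpos⟩).r
          · have hcond : ∀ x' ∈ I, x'.r < (a ⟨0, htpos⟩).l → x'.r ≤ y.l := by
              intro x' hx' hxr
              have := (hlrep.2 htpos).1.1 x' hx' hxr
              linarith [hsin.1]
            have hmin := (hlrep.2 htpos).2 y hyS hcond hcase
            linarith [hsin.2]
          · push_neg at hcase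
            have h1 : (b (⟨0, htpos⟩ : Fin t).succ).l ≤ (a ⟨0, htpos⟩).r := (hm2 ⟨0, htpos⟩).2
            have h2 : (b 0).r < (b (⟨0, htpos⟩ : Fin t).succ).l := by
              apply hbord
              rw [Fin.lt_def]; simp
            linarith [y.hle, hsin.2]
        · -- j = i.succ
          by_cases hcase : y.l ≤ (a i).r
          · have hc1 : (b i.castSucc).r ≤ y.l := by
              have := (hlrep.1 i).1.1
              linarith [hsin.1]
            have := (hlrep.1 i).2 y hyS hc1 hcase
            linarith [hsin.2]
          · push_neg at hcase
            have hKa : ∀ m : Fin t, (m : ℕ) < ((i.succ : Fin (t+1)) : ℕ) → ¬ (a m).meets y := by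
              intro m hm hmy
              by_cases hmi : (m : ℕ) = (i : ℕ)
              · have : m = i := Fin.ext hmi
                subst this
                exact absurd hmy.2 (not_le.mpr hcase)
              · have hmlt : (m : ℕ) < (i : ℕ) := by
                  simp only [Fin.val_succ] at hm; omega
                have : ¬ (a m).meets (b i.succ) := by
                  intro hmm
                  rcases (hiff m i.succ).mp hmm with h | h
                  · have := congrArg Fin.val h
                    simp only [Fin.val_succ, Fin.coe_castSucc] at this; omega
                  · have := congrArg Fin.val h
                    simp only [Fin.val_succ] at this; omega
                exact not_meets_of_strictIn hsin this hmy
            by_cases hjt : ((i.succ : Fin (t+1)) : ℕ) < t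
            · set i2 : Fin t := ⟨(i.succ : Fin (t+1)) , hjt⟩ with hi2
              by_cases hmy : (a i2).meets y
              · -- suffix path construction
                set jv : ℕ := ((i.succ : Fin (t+1)) : ℕ) with hjv
                have hjv1 : jv = (i : ℕ) + 1 := by simp [hjv]
                have hjvt : jv < t := hjt
                set e : Fin (t - jv) → Fin t := fun r => ⟨jv + r.1, by omega⟩ with he
                set e' : Fin (t - jv) → Fin (t+1) := fun r => ⟨jv + 1 + r.1, by omega⟩ with he'
                have heinj : Function.Injective e := by
                  intro r s hrs
                  have := congrArg Fin.val hrs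
                  simp only [he] at this
                  exact Fin.ext (by omega)
                have he'inj : Function.Injective e' := by
                  intro r s hrs
                  have := congrArg Fin.val hrs
                  simp only [he'] at this
                  exact Fin.ext (by omega)
                set X : Finset Ivl := Finset.image (fun r => a (e r)) Finset.univ with hXdef
                set Y : Finset Ivl := insert y (Finset.image (fun r => b (e' r)) Finset.univ) with hYdef
                have hXA : X ⊆ A := by
                  intro z hz
                  obtain ⟨r, _, rfl⟩ := Finset.mem_image.mp hz
                  exact haA _
                have hXI : X ⊆ I := subset_trans hXA hAI
                have hYS : Y ⊆ S \ I := by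
                  intro z hz
                  rcases Finset.mem_insert.mp hz with rfl | hz
                  · exact hySI
                  · obtain ⟨r, _, rfl⟩ := Finset.mem_image.mp hz
                    exact hBS (hbB _)
                have hynotim : y ∉ Finset.image (fun r => b (e' r)) Finset.univ := by
                  intro hc
                  obtain ⟨r, _, hr⟩ := Finset.mem_image.mp hc
                  exact hynB (hr ▸ hbB (e' r))
                have hXinj : Function.Injective (fun r => a (e r)) :=
                  fun r s h => heinj (hainj h)
                have hYinj : Function.Injective (fun r => b (e' r)) :=
                  fun r s h => he'inj (hbinj h)
                have hXcard : X.card = t - jv := by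
                  rw [hXdef, Finset.card_image_of_injective _ hXinj,
                    Finset.card_univ, Fintype.card_fin]
                have hYcard : Y.card = X.card + 1 := by
                  rw [hYdef, Finset.card_insert_of_notMem hynotim,
                    Finset.card_image_of_injective _ hYinj,
                    Finset.card_univ, Fintype.card_fin, hXcard]
                have hmemX : ∀ m : Fin t, a m ∈ X ↔ jv ≤ (m : ℕ) := by
                  intro m
                  constructor
                  · intro hm
                    obtain ⟨r, _, hr⟩ := Finset.mem_image.mp hm
                    have := congrArg Fin.val (hainj hr)
                    simp only [he] at this
                    omega
                  · intro hm
                    apply Finset.mem_image.mpr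
                    refine ⟨⟨(m : ℕ) - jv, by omega⟩, Finset.mem_univ _, ?_⟩
                    congr 1
                    exact Fin.ext (by simp [he]; omega)
                -- separation: intervals of I outside X meet nothing of Y
                have hsep2 : ∀ x' ∈ I, x' ∉ X → ∀ z ∈ Y, ¬ x'.meets z := by
                  intro x' hx'I hx'X z hz
                  rcases Finset.mem_insert.mp hz with rfl | hz
                  · by_cases hx'A : x' ∈ A
                    · obtain ⟨m, rfl⟩ := hasurj x' hx'A
                      have hmlt : (m : ℕ) < jv := by
                        by_contra hge
                        push_neg at hge
                        exact hx'X ((hmemX m).mpr hge)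
                      exact hKa m hmlt
                    · exact hyIA x' hx'I hx'A
                  · obtain ⟨r, _, rfl⟩ := Finset.mem_image.mp hz
                    by_cases hx'A : x' ∈ A
                    · obtain ⟨m, rfl⟩ := hasurj x' hx'A
                      have hmlt : (m : ℕ) < jv := by
                        by_contra hge
                        push_neg at hge
                        exact hx'X ((hmemX m).mpr hge)
                      intro hmm
                      rcases (hiff m (e' r)).mp hmm with h | h
                      · have := congrArg Fin.val h
                        simp only [he', Fin.coe_castSucc] at this; omega
                      · have := congrArg Fin.val h
                        simp only [he', Fin.val_succ] at this; omega
                    · exact hsepIA x' hx'I hx'A (e' r)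
                have hindep2 : IsIndep S ((I \ X) ∪ Y) := by
                  constructor
                  · intro z hz
                    rcases Finset.mem_union.mp hz with h | h
                    · exact hIind.1 (Finset.mem_sdiff.mp h).1
                    · exact (Finset.mem_sdiff.mp (hYS h)).1
                  · intro u hu v hv hne
                    rcases Finset.mem_union.mp hu with hu | hu <;>
                      rcases Finset.mem_union.mp hv with hv | hv
                    · exact hIind.2 u (Finset.mem_sdiff.mp hu).1 v (Finset.mem_sdiff.mp hv).1 hne
                    · exact hsep2 u (Finset.mem_sdiff.mp hu).1 (Finset.mem_sdiff.mp hu).2 v hv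
                    · intro hm
                      exact hsep2 v (Finset.mem_sdiff.mp hv).1 (Finset.mem_sdiff.mp hv).2 u hu
                        (meets_symm hm)
                    · -- both in Y
                      rcases Finset.mem_insert.mp hu with rfl | hu' <;>
                        rcases Finset.mem_insert.mp hv with rfl | hv'
                      · exact absurd rfl hne
                      · obtain ⟨r, _, rfl⟩ := Finset.mem_image.mp hv'
                        intro hm
                        have hne' : e' r ≠ i.succ := by
                          intro h
                          have := congrArg Fin.val h
                          simp only [he', Fin.val_succ] at this
                          omega
                        exact hKb (e' r) hne' (meets_symm hm)
                      · obtain ⟨r, _, rfl⟩ := Finset.mem_image.mp hu'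
                        have hne' : e' r ≠ i.succ := by
                          intro h
                          have := congrArg Fin.val h
                          simp only [he', Fin.val_succ] at this
                          omega
                        exact hKb (e' r) hne' 
                      · obtain ⟨r, _, rfl⟩ := Finset.mem_image.mp hu'
                        obtain ⟨s, _, rfl⟩ := Finset.mem_image.mp hv'
                        exact hI'ind.2 _ (hB_I' (hbB _)) _ (hB_I' (hbB _)) hne
                have hdeg2 : ∀ x' ∈ X, ∃ y1 ∈ Y, ∃ y2 ∈ Y, y1 ≠ y2 ∧ x'.meets y1 ∧ x'.meets y2 := by
                  intro x' hx'
                  obtain ⟨r, _, rfl⟩ := Finset.mem_image.mp hx'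
                  by_cases hr0 : (r : ℕ) = 0
                  · have her : e r = i2 := Fin.ext (by simp [he, hi2, hr0]; omega)
                    have hesucc : (e r).succ = e' r := Fin.ext (by simp [he, he']; omega)
                    refine ⟨y, Finset.mem_insert_self _ _, b (e' r),
                      Finset.mem_insert_of_mem (Finset.mem_image_of_mem _ (Finset.mem_univ r)),
                      ?_, ?_, ?_⟩
                    · intro h; exact hynB (h ▸ hbB (e' r))
                    · rw [her]; exact hmy
                    · rw [← hesucc]; exact hm2 (e r)
                  · have hcs2 : (e r).castSucc = e' ⟨(r : ℕ) - 1, by omega⟩ :=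
                      Fin.ext (by simp [he, he']; omega)
                    have hesucc : (e r).succ = e' r := Fin.ext (by simp [he, he']; omega)
                    refine ⟨b (e' ⟨(r : ℕ) - 1, by omega⟩),
                      Finset.mem_insert_of_mem (Finset.mem_image_of_mem _ (Finset.mem_univ _)),
                      b (e' r),
                      Finset.mem_insert_of_mem (Finset.mem_image_of_mem _ (Finset.mem_univ r)),
                      ?_, ?_, ?_⟩
                    · intro h
                      have h2 : (⟨(r : ℕ) - 1, by omega⟩ : Fin (t - jv)) = r := he'inj (hbinj h)
                      have h3 := congrArg Fin.val h2
                      simp only [] at h3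
                      omega
                    · rw [← hcs2]; exact hm1 (e r)
                    · rw [← hesucc]; exact hm2 (e r)
                have hpath2 : IsAltPath S I X Y :=
                  path_extraction S I X Y hIind hInc hXI hYS hYcard hindep2 hsep2 hdeg2
                have hssub : X ⊂ A := by
                  rw [Finset.ssubset_iff_subset_ne]
                  refine ⟨hXA, ?_⟩
                  intro h
                  have : a i ∈ X := h ▸ haA i
                  have := (hmemX i).mp this
                  omega
                exact hsmall ⟨X, Y, hssub, hpath2⟩
              · -- y meets nothing of I : singleton improvement contradicts maximality
                have hzy : ∀ z ∈ I, ¬ z.meets y := by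
                  intro z hzI
                  by_cases hzA : z ∈ A
                  · obtain ⟨m, rfl⟩ := hasurj z hzA
                    by_cases hmlt : (m : ℕ) < ((i.succ : Fin (t+1)) : ℕ)
                    · exact hKa m hmlt
                    · push_neg at hmlt
                      by_cases hmi2 : m = i2
                      · intro hmm; exact hmy (hmi2 ▸ hmm)
                      · intro hmm
                        have : ¬ (a m).meets (b i.succ) := by
                          intro hmm2
                          rcases (hiff m i.succ).mp hmm2 with h | h
                          · exact hmi2 (Fin.ext (by
                              have := congrArg Fin.val h
                              simp only [Fin.coe_castSucc, Fin.val_succ] at this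
                              simp [hi2]; omega))
                          · have hvv := congrArg Fin.val h
                            simp only [Fin.val_succ] at hvv
                            simp only [Fin.val_succ] at hmlt
                            omega
                        exact not_meets_of_strictIn hsin this hmm
                  · exact hyIA z hzI hzA
                apply hImax 0 (Nat.zero_le k) ∅ (Finset.empty_subset I) {y}
                  (Finset.singleton_subset_iff.mpr hySI) rfl rfl
                rw [Finset.sdiff_empty]
                constructor
                · intro z hz
                  rcases Finset.mem_union.mp hz with h | h
                  · exact hIind.1 h
                  · rw [Finset.mem_singleton.mp h]; exact hyS
                · intro u hu v hv hne
                  rcases Finset.mem_union.mp hu with hu | hu <;>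
                    rcases Finset.mem_union.mp hv with hv | hv
                  · exact hIind.2 u hu v hv hne
                  · rw [Finset.mem_singleton.mp hv]; exact hzy u hu
                  · rw [Finset.mem_singleton.mp hu]
                    intro hm
                    exact hzy v hv (meets_symm hm)
                  · rw [Finset.mem_singleton.mp hu, Finset.mem_singleton.mp hv] at hne
                    exact absurd rfl hne
            · -- j = i.succ is the last index : singleton improvement
              push_neg at hjt
              have hzy : ∀ z ∈ I, ¬ z.meets y := by
                intro z hzI
                by_cases hzA : z ∈ A
                · obtain ⟨m, rfl⟩ := hasurj z hzA
                  by_cases hmlt : (m : ℕ) < ((i.succ : Fin (t+1)) : ℕ)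
                  · exact hKa m hmlt
                  · push_neg at hmlt
                    exfalso
                    have : (m : ℕ) < t := m.isLt
                    omega
                · exact hyIA z hzI hzA
              apply hImax 0 (Nat.zero_le k) ∅ (Finset.empty_subset I) {y}
                (Finset.singleton_subset_iff.mpr hySI) rfl rfl
              rw [Finset.sdiff_empty]
              constructor
              · intro z hz
                rcases Finset.mem_union.mp hz with h | h
                · exact hIind.1 h
                · rw [Finset.mem_singleton.mp h]; exact hyS
              · intro u hu v hv hne
                rcases Finset.mem_union.mp hu with hu | hu <;>
                  rcases Finset.mem_union.mp hv with hv | hv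
                · exact hIind.2 u hu v hv hne
                · rw [Finset.mem_singleton.mp hv]; exact hzy u hu
                · rw [Finset.mem_singleton.mp hu]
                  intro hm
                  exact hzy v hv (meets_symm hm)
                · rw [Finset.mem_singleton.mp hu, Finset.mem_singleton.mp hv] at hne
                  exact absurd rfl hne
  -- Part B : k-maximality of I'
  have hmax' : ∀ n, n ≤ k → ∀ A', A' ⊆ I' → ∀ B', B' ⊆ S \ I' →
      A'.card = n → B'.card = n + 1 → ¬ IsIndep S ((I' \ A') ∪ B') := by
    intro n0 hn0 A0 hA0 B0 hB0 hA0c hB0c hind0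
    have hex : ∃ n, ∃ A' B' : Finset Ivl, A' ⊆ I' ∧ B' ⊆ S \ I' ∧ A'.card = n ∧
        B'.card = n + 1 ∧ n ≤ k ∧ IsIndep S ((I' \ A') ∪ B') :=
      ⟨n0, A0, B0, hA0, hB0, hA0c, hB0c, hn0, hind0⟩
    set n : ℕ := Nat.find hex with hndef
    obtain ⟨A', B', hA'I', hB'SI', hA'c, hB'c, hnk, hEind⟩ := Nat.find_spec hex
    have hminim : ∀ m, m < n → ∀ A'' B'' : Finset Ivl, A'' ⊆ I' → B'' ⊆ S \ I' →
        A''.card = m → B''.card = m + 1 → ¬ IsIndep S ((I' \ A'') ∪ B'') := by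
      intro m hm A'' B'' h1 h2 h3 h4 h6
      exact Nat.find_min hex hm ⟨A'', B'', h1, h2, h3, h4, by omega, h6⟩
    rw [← hndef] at hA'c hB'c
    set E : Finset Ivl := (I' \ A') ∪ B' with hEdef
    have hB'nI' : ∀ y ∈ B', y ∉ I' := fun y hy => (Finset.mem_sdiff.mp (hB'SI' hy)).2
    have hB'S : ∀ y ∈ B', y ∈ S := fun y hy => (Finset.mem_sdiff.mp (hB'SI' hy)).1
    have hES : E ⊆ S := hEind.1
    have hB'E : B' ⊆ E := fun y hy => Finset.mem_union_right _ hy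
    have hF3 : ∀ y ∈ B', ∀ z ∈ I', z ∉ A' → ¬ y.meets z := by
      intro y hy z hz hzA'
      exact hEind.2 y (hB'E hy) z
        (Finset.mem_union_left _ (Finset.mem_sdiff.mpr ⟨hz, hzA'⟩))
        (fun h => hB'nI' y hy (h ▸ hz))
    have hI'card : I'.card = I.card + 1 := by
      have hd : Disjoint (I \ A) B := by
        rw [Finset.disjoint_right]
        intro y hy
        exact fun hy2 => (Finset.mem_sdiff.mp (hBS hy)).2 (Finset.mem_sdiff.mp hy2).1
      have hAle : A.card ≤ I.card := Finset.card_le_card hAI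
      rw [hI'def, Finset.card_union_of_disjoint hd, Finset.card_sdiff_of_subset hAI, hAcard, hBcard]
      omega
    have hEcard : E.card = I.card + 2 := by
      have hd : Disjoint (I' \ A') B' := by
        rw [Finset.disjoint_right]
        intro y hy
        exact fun hy2 => hB'nI' y hy (Finset.mem_sdiff.mp hy2).1
      have hA'le : A'.card ≤ I'.card := Finset.card_le_card hA'I'
      rw [hEdef, Finset.card_union_of_disjoint hd, Finset.card_sdiff_of_subset hA'I', hA'c, hB'c, hI'card]
      rw [hA'c, hI'card] at hA'le
      omega
    set At : Finset Ivl := I \ E with hAtdef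
    set Bt : Finset Ivl := E \ I with hBtdef
    have hAtI : At ⊆ I := Finset.sdiff_subset
    have hBtSI : Bt ⊆ S \ I := fun y hy =>
      Finset.mem_sdiff.mpr ⟨hES (Finset.mem_sdiff.mp hy).1, (Finset.mem_sdiff.mp hy).2⟩
    have hBtE : Bt ⊆ E := Finset.sdiff_subset
    have hBtdisj : ∀ y1 ∈ Bt, ∀ y2 ∈ Bt, y1 ≠ y2 → ¬ y1.meets y2 :=
      fun y1 h1 y2 h2 hne => hEind.2 y1 (hBtE h1) y2 (hBtE h2) hne
    have hcards : Bt.card = At.card + 2 := by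
      have h1 : (I ∩ E).card + (I \ E).card = I.card := Finset.card_inter_add_card_sdiff I E
      have h2 : (E ∩ I).card + (E \ I).card = E.card := Finset.card_inter_add_card_sdiff E I
      rw [Finset.inter_comm] at h2
      rw [hAtdef, hBtdef]
      omega
    have hF1 : ∀ y ∈ Bt, ∀ z ∈ I, z ∉ At → ¬ y.meets z := by
      intro y hy z hz hzAt
      have hzE : z ∈ E := by
        by_contra h
        exact hzAt (Finset.mem_sdiff.mpr ⟨hz, h⟩)
      exact hEind.2 y (hBtE hy) z hzE (fun h => (Finset.mem_sdiff.mp hy).2 (h ▸ hz))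
    have hAt_AA' : ∀ x ∈ At, x ∉ A → x ∈ A' := by
      intro x hx hxA
      obtain ⟨hxI, hxE⟩ := Finset.mem_sdiff.mp hx
      by_contra hxA'
      exact hxE (Finset.mem_union_left _
        (Finset.mem_sdiff.mpr ⟨hInA_I' (Finset.mem_sdiff.mpr ⟨hxI, hxA⟩), hxA'⟩))
    set V : Finset Ivl := At ∪ Bt with hVdef
    set comp : Ivl → Finset Ivl := fun y => V.filter (Reach V y) with hcompdef
    have hcomp_eq : ∀ y z : Ivl, Reach V y z → comp y = comp z := by
      intro y z hyz
      ext w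
      simp only [hcompdef, Finset.mem_filter, and_congr_right_iff]
      intro _
      exact ⟨fun h => reach_trans (reach_symm hyz) h, fun h => reach_trans hyz h⟩
    have hcomp_mem_self : ∀ y ∈ V, y ∈ comp y :=
      fun y hy => Finset.mem_filter.mpr ⟨hy, reach_refl y⟩
    set CS : Finset (Finset Ivl) := Bt.image comp with hCSdef
    have hCSdisj : ∀ C1 ∈ CS, ∀ C2 ∈ CS, C1 ≠ C2 → ∀ w, w ∈ C1 → w ∉ C2 := by
      intro C1 h1 C2 h2 hne w hw1 hw2
      obtain ⟨y1, _, rfl⟩ := Finset.mem_image.mp h1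
      obtain ⟨y2, _, rfl⟩ := Finset.mem_image.mp h2
      obtain ⟨hwV, hr1⟩ := Finset.mem_filter.mp hw1
      obtain ⟨_, hr2⟩ := Finset.mem_filter.mp hw2
      exact hne ((hcomp_eq y1 w hr1).trans (hcomp_eq y2 w hr2).symm)
    have hCsub' : ∀ C ∈ CS, C ⊆ V := by
      intro C hC
      obtain ⟨y0, _, rfl⟩ := Finset.mem_image.mp hC
      exact Finset.filter_subset _ _
    have hCconn' : ∀ C ∈ CS, ∀ u ∈ C, ∀ v ∈ C, Reach V u v := by
      intro C hC u hu v hv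
      obtain ⟨y0, _, rfl⟩ := Finset.mem_image.mp hC
      exact reach_trans (reach_symm (Finset.mem_filter.mp hu).2) (Finset.mem_filter.mp hv).2
    have hCclos : ∀ C ∈ CS, ∀ u ∈ C, ∀ v, Reach V u v → v ∈ C := by
      intro C hC u hu v huv
      obtain ⟨y0, _, rfl⟩ := Finset.mem_image.mp hC
      exact Finset.mem_filter.mpr ⟨reach_mem_right huv (Finset.mem_filter.mp hu).1,
        reach_trans (Finset.mem_filter.mp hu).2 huv⟩
    have hCfacts : ∀ C ∈ CS, (C ∩ Bt).card ≤ (C ∩ At).card + 1 ∧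
        ((C ∩ Bt).card = (C ∩ At).card + 1 → ∀ x ∈ C ∩ At,
          ∃ y1 ∈ C ∩ Bt, ∃ y2 ∈ C ∩ Bt, y1 ≠ y2 ∧ x.meets y1 ∧ x.meets y2) :=
      fun C hC => comp_surplus S I At Bt C hIind hInc hAtI hBtSI hBtdisj
        (hCsub' C hC) (hCconn' C hC) (hCclos C hC)
    have hdisjB : ∀ C1 ∈ CS, ∀ C2 ∈ CS, C1 ≠ C2 → Disjoint (C1 ∩ Bt) (C2 ∩ Bt) := by
      intro C1 h1 C2 h2 hne
      rw [Finset.disjoint_left]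
      intro w hw hw2
      exact hCSdisj C1 h1 C2 h2 hne w (Finset.mem_inter.mp hw).1 (Finset.mem_inter.mp hw2).1
    have hdisjA : ∀ C1 ∈ CS, ∀ C2 ∈ CS, C1 ≠ C2 → Disjoint (C1 ∩ At) (C2 ∩ At) := by
      intro C1 h1 C2 h2 hne
      rw [Finset.disjoint_left]
      intro w hw hw2
      exact hCSdisj C1 h1 C2 h2 hne w (Finset.mem_inter.mp hw).1 (Finset.mem_inter.mp hw2).1
    have hBtun : CS.biUnion (fun C => C ∩ Bt) = Bt := by
      apply subset_antisymm
      · intro w hw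
        obtain ⟨C, _, hw2⟩ := Finset.mem_biUnion.mp hw
        exact (Finset.mem_inter.mp hw2).2
      · intro y hy
        exact Finset.mem_biUnion.mpr ⟨comp y, Finset.mem_image_of_mem _ hy,
          Finset.mem_inter.mpr ⟨hcomp_mem_self y (Finset.mem_union_right _ hy), hy⟩⟩
    have hsum1 : ∑ C ∈ CS, (C ∩ Bt).card = Bt.card := by
      rw [← Finset.card_biUnion hdisjB, hBtun]
    have hsum2 : ∑ C ∈ CS, (C ∩ At).card ≤ At.card := by
      rw [← Finset.card_biUnion hdisjA]
      exact Finset.card_le_card (fun w hw => (Finset.mem_inter.mp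
        (Finset.mem_biUnion.mp hw).choose_spec.2).2)
    set CS1 : Finset (Finset Ivl) :=
      CS.filter (fun C => (C ∩ At).card + 1 ≤ (C ∩ Bt).card) with hCS1def
    have h2le : 2 ≤ CS1.card := by
      by_contra hcon
      push_neg at hcon
      have hbound : ∀ C ∈ CS, (C ∩ Bt).card ≤ (C ∩ At).card + (if C ∈ CS1 then 1 else 0) := by
        intro C hC
        by_cases h : C ∈ CS1
        · simp only [h, if_true]
          exact (hCfacts C hC).1
        · simp only [h, if_false]
          have := Finset.mem_filter.not.mp h
          push_neg at this
          have h2 := this hC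
          omega
      have hsum3 := Finset.sum_le_sum hbound
      rw [Finset.sum_add_distrib, hsum1] at hsum3
      have hsum4 : (∑ C ∈ CS, if C ∈ CS1 then 1 else 0) = CS1.card := by
        rw [Finset.sum_ite_mem]
        have : CS ∩ CS1 = CS1 := by
          apply Finset.inter_eq_right.mpr
          exact Finset.filter_subset _ _
        rw [this]
        simp
      rw [hsum4] at hsum3
      omega
    have hCS1card : 1 < CS1.card := by omega
    obtain ⟨C1, hC1, C2, hC2, hC12⟩ := Finset.one_lt_card.mp hCS1card
    have hC1CS : C1 ∈ CS := (Finset.mem_filter.mp hC1).1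
    have hC2CS : C2 ∈ CS := (Finset.mem_filter.mp hC2).1
    have hCeq : ∀ C ∈ CS1, (C ∩ Bt).card = (C ∩ At).card + 1 := by
      intro C hC
      have h1 := (Finset.mem_filter.mp hC).2
      have h2 := (hCfacts C (Finset.mem_filter.mp hC).1).1
      omega
    have hsepC : ∀ C ∈ CS, ∀ x ∈ I, x ∉ C ∩ At → ∀ y ∈ C ∩ Bt, ¬ x.meets y := by
      intro C hC x hxI hxCAt y hyC hm
      obtain ⟨hyCmem, hyBt⟩ := Finset.mem_inter.mp hyC
      by_cases hxAt : x ∈ At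
      · have hxC : x ∈ C := hCclos C hC y hyCmem x
          (Relation.ReflTransGen.single
            ⟨hCsub' C hC hyCmem, Finset.mem_union_left _ hxAt, meets_symm hm⟩)
        exact hxCAt (Finset.mem_inter.mpr ⟨hxC, hxAt⟩)
      · exact hF1 y hyBt x hxI hxAt (meets_symm hm)
    have hindC : ∀ C ∈ CS, IsIndep S ((I \ (C ∩ At)) ∪ (C ∩ Bt)) := by
      intro C hC
      constructor
      · intro z hz
        rcases Finset.mem_union.mp hz with h | h
        · exact hIind.1 (Finset.mem_sdiff.mp h).1
        · exact (Finset.mem_sdiff.mp (hBtSI (Finset.mem_inter.mp h).2)).1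
      · intro u hu v hv hne
        rcases Finset.mem_union.mp hu with hu' | hu' <;>
          rcases Finset.mem_union.mp hv with hv' | hv'
        · exact hIind.2 u (Finset.mem_sdiff.mp hu').1 v (Finset.mem_sdiff.mp hv').1 hne
        · exact fun hm =>
            hsepC C hC u (Finset.mem_sdiff.mp hu').1 (Finset.mem_sdiff.mp hu').2 v hv' hm
        · exact fun hm =>
            hsepC C hC v (Finset.mem_sdiff.mp hv').1 (Finset.mem_sdiff.mp hv').2 u hu'
              (meets_symm hm)
        · exact hBtdisj u (Finset.mem_inter.mp hu').2 v (Finset.mem_inter.mp hv').2 hne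
    have hbig : ∀ C ∈ CS1, k + 1 ≤ (C ∩ At).card := by
      intro C hC
      by_contra hsm
      push_neg at hsm
      exact hImax (C ∩ At).card (by omega) (C ∩ At)
        (fun x hx => hAtI (Finset.mem_inter.mp hx).2) (C ∩ Bt)
        (fun y hy => hBtSI (Finset.mem_inter.mp hy).2) rfl (hCeq C hC)
        (hindC C (Finset.mem_filter.mp hC).1)
    have hpure : ∀ C ∈ CS1, C ∩ At ⊆ A → C ∩ At = A := by
      intro C hC hsub
      by_contra hne
      apply hsmall
      refine ⟨C ∩ At, C ∩ Bt, Finset.ssubset_iff_subset_ne.mpr ⟨hsub, hne⟩, ?_⟩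
      exact path_extraction S I _ _ hIind hInc
        (fun x hx => hAtI (Finset.mem_inter.mp hx).2)
        (fun y hy => hBtSI (Finset.mem_inter.mp hy).2)
        (hCeq C hC) (hindC C (Finset.mem_filter.mp hC).1)
        (hsepC C (Finset.mem_filter.mp hC).1)
        ((hCfacts C (Finset.mem_filter.mp hC).1).2 (hCeq C hC))
    have hAelt : ∀ C ∈ CS1, ∃ i : Fin t, a i ∈ C := by
      intro C hC
      have hsub : (C ∩ At) \ A ⊆ A' := by
        intro x hx
        obtain ⟨hx1, hx2⟩ := Finset.mem_sdiff.mp hx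
        exact hAt_AA' x (Finset.mem_inter.mp hx1).2 hx2
      have h1 : ((C ∩ At) \ A).card ≤ n := by
        rw [← hA'c]; exact Finset.card_le_card hsub
      have h2 : ((C ∩ At) ∩ A).card + ((C ∩ At) \ A).card = (C ∩ At).card :=
        Finset.card_inter_add_card_sdiff _ _
      have h3 : k + 1 ≤ (C ∩ At).card := hbig C hC
      have h4 : 0 < ((C ∩ At) ∩ A).card := by omega
      obtain ⟨x, hx⟩ := Finset.card_pos.mp h4
      obtain ⟨i, rfl⟩ := hasurj x (Finset.mem_inter.mp hx).2
      exact ⟨i, (Finset.mem_inter.mp (Finset.mem_inter.mp hx).1).1⟩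
    have hleftpt : ∀ C ∈ CS, ∀ xb ∈ C, xb.r < (b 0).l → ∀ i : Fin t, a i ∈ C →
        ∃ w ∈ C, w.l ≤ (b 0).l ∧ (b 0).l ≤ w.r := by
      intro C hC xb hxbC hxbr i haiC
      by_cases hcase : (b 0).l ≤ (a i).l
      · obtain ⟨w, hw1, hw2, hw3, hw4⟩ := reach_cover (hCconn' C hC xb hxbC (a i) haiC)
          (hCsub' C hC hxbC) (b 0).l (le_of_lt hxbr) hcase
        exact ⟨w, hCclos C hC xb hxbC w hw1, hw3, hw4⟩
      · push_neg at hcase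
        refine ⟨a i, haiC, le_of_lt hcase, ?_⟩
        have h1 : (b i.castSucc).l ≤ (a i).r := (hm1 i).2
        have h2 : (b 0).l ≤ (b i.castSucc).l :=
          (hbltlt 0 i.castSucc (Fin.zero_le _)).1
        linarith
    have hrightpt : ∀ C ∈ CS, ∀ xb ∈ C, (b (Fin.last t)).r < xb.l → ∀ i : Fin t, a i ∈ C →
        ∃ w ∈ C, w.l ≤ (b (Fin.last t)).r ∧ (b (Fin.last t)).r ≤ w.r := by
      intro C hC xb hxbC hxbl i haiC
      by_cases hcase : (a i).r ≤ (b (Fin.last t)).r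
      · obtain ⟨w, hw1, hw2, hw3, hw4⟩ := reach_cover (hCconn' C hC (a i) haiC xb hxbC)
          (hCsub' C hC haiC) (b (Fin.last t)).r hcase (le_of_lt hxbl)
        exact ⟨w, hCclos C hC (a i) haiC w hw1, hw3, hw4⟩
      · push_neg at hcase
        refine ⟨a i, haiC, ?_, le_of_lt hcase⟩
        have h1 : (a i).l ≤ (b i.castSucc).r := (hm1 i).1
        have h2 : (b i.castSucc).r ≤ (b (Fin.last t)).r :=
          (hbltlt i.castSucc (Fin.last t)
            (by simp only [Fin.le_def, Fin.coe_castSucc, Fin.val_last]; exact le_of_lt i.isLt)).2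
        linarith
    -- anatomy : A' cannot contain intervals on both sides of the path
    have hanat : ∀ u ∈ A', u.r < (b 0).l → ∀ v ∈ A', (b (Fin.last t)).r < v.l → False := by
      intro u huA' hul v hvA' hvr
      set V2 : Finset Ivl := A' ∪ B' with hV2def
      by_cases hreach : Reach V2 u v
      · have hbA' : ∀ j : Fin (t+1), b j ∈ A' := by
          intro j
          have h1 : u.r ≤ (b j).l := by
            have := (hbltlt 0 j (Fin.zero_le _)).1
            linarith
          have h2 : (b j).l ≤ v.l := by
            have h3 := (hbltlt j (Fin.last t)
              (by simp only [Fin.le_def, Fin.val_last]; exact Nat.lt_succ_iff.mp j.isLt)).2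
            linarith [(b j).hle]
          obtain ⟨w, hwre, hwV2, hwl, hwr⟩ := reach_cover hreach
            (Finset.mem_union_left _ huA') (b j).l h1 h2
          have hwm : w.meets (b j) := ⟨le_trans hwl (b j).hle, hwr⟩
          rcases Finset.mem_union.mp hwV2 with h | h
          · by_cases hwb : w = b j
            · exact hwb ▸ h
            · exact absurd hwm (hI'ind.2 w (hA'I' h) (b j) (hB_I' (hbB j)) hwb)
          · by_contra hbjA'
            exact hF3 w h (b j) (hB_I' (hbB j)) hbjA' hwm
        have himg : Finset.image b Finset.univ ⊆ A' := by
          intro z hz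
          obtain ⟨j, _, rfl⟩ := Finset.mem_image.mp hz
          exact hbA' j
        have hcard2 : t + 1 ≤ n := by
          rw [← hA'c]
          calc t + 1 = (Finset.image b Finset.univ).card := by
                rw [Finset.card_image_of_injective _ hbinj, Finset.card_univ, Fintype.card_fin]
            _ ≤ A'.card := Finset.card_le_card himg
        omega
      · set D : Finset Ivl := V2.filter (Reach V2 u) with hDdef
        have huD : u ∈ D := Finset.mem_filter.mpr ⟨Finset.mem_union_left _ huA', reach_refl u⟩
        have hvD : v ∉ D := fun h => hreach (Finset.mem_filter.mp h).2
        have hDstep : ∀ w ∈ D, ∀ z ∈ V2, w.meets z → z ∈ D := by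
          intro w hw z hz hm
          exact Finset.mem_filter.mpr ⟨hz,
            reach_step (Finset.mem_filter.mp hw).2 (Finset.mem_filter.mp hw).1 hz hm⟩
        by_cases hcaseD : (A' ∩ D).card + 1 ≤ (B' ∩ D).card
        · obtain ⟨B'', hB''sub, hB''c⟩ := Finset.exists_subset_card_eq (s := B' ∩ D)
            (n := (A' ∩ D).card + 1) hcaseD
          have hlt : (A' ∩ D).card < n := by
            rw [← hA'c]
            apply Finset.card_lt_card
            rw [Finset.ssubset_iff_subset_ne]
            refine ⟨Finset.inter_subset_left, ?_⟩
            intro h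
            have hvv : v ∈ A' ∩ D := h.symm ▸ hvA'
            exact hvD (Finset.mem_inter.mp hvv).2
          apply hminim (A' ∩ D).card hlt (A' ∩ D) B''
            (fun x hx => hA'I' (Finset.mem_inter.mp hx).1)
            (fun y hy => hB'SI' (Finset.mem_inter.mp (hB''sub hy)).1) rfl hB''c
          constructor
          · intro z hz
            rcases Finset.mem_union.mp hz with h | h
            · exact hI'S (Finset.mem_sdiff.mp h).1
            · exact hB'S _ (Finset.mem_inter.mp (hB''sub h)).1
          · intro w1 hw1 w2 hw2 hne
            have cross : ∀ z1 z2 : Ivl, z1 ∈ I' \ (A' ∩ D) → z2 ∈ B'' → ¬ z1.meets z2 := by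
              intro z1 z2 h1 h2 hm
              obtain ⟨hz1I', hz1n⟩ := Finset.mem_sdiff.mp h1
              obtain ⟨hz2B', hz2D⟩ := Finset.mem_inter.mp (hB''sub h2)
              by_cases hz1A' : z1 ∈ A'
              · have hz1D : z1 ∉ D := fun h => hz1n (Finset.mem_inter.mpr ⟨hz1A', h⟩)
                exact hz1D (hDstep z2 hz2D z1 (Finset.mem_union_left _ hz1A') (meets_symm hm))
              · exact hF3 z2 hz2B' z1 hz1I' hz1A' (meets_symm hm)
            rcases Finset.mem_union.mp hw1 with h1 | h1 <;>
              rcases Finset.mem_union.mp hw2 with h2 | h2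
            · exact hI'ind.2 w1 (Finset.mem_sdiff.mp h1).1 w2 (Finset.mem_sdiff.mp h2).1 hne
            · exact cross w1 w2 h1 h2
            · exact fun hm => cross w2 w1 h2 h1 (meets_symm hm)
            · exact hEind.2 w1 (hB'E (Finset.mem_inter.mp (hB''sub h1)).1) w2
                (hB'E (Finset.mem_inter.mp (hB''sub h2)).1) hne
        · push_neg at hcaseD
          have h1 : (A' ∩ D).card + (A' \ D).card = A'.card :=
            Finset.card_inter_add_card_sdiff A' D
          have h2 : (B' ∩ D).card + (B' \ D).card = B'.card :=
            Finset.card_inter_add_card_sdiff B' D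
          have hcount : (A' \ D).card + 1 ≤ (B' \ D).card := by
            rw [hA'c] at h1; rw [hB'c] at h2; omega
          obtain ⟨B'', hB''sub, hB''c⟩ := Finset.exists_subset_card_eq (s := B' \ D)
            (n := (A' \ D).card + 1) hcount
          have hlt : (A' \ D).card < n := by
            rw [← hA'c]
            apply Finset.card_lt_card
            rw [Finset.ssubset_iff_subset_ne]
            refine ⟨Finset.sdiff_subset, ?_⟩
            intro h
            have huu : u ∈ A' \ D := h.symm ▸ huA'
            exact (Finset.mem_sdiff.mp huu).2 huD
          apply hminim (A' \ D).card hlt (A' \ D) B''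
            (fun x hx => hA'I' (Finset.mem_sdiff.mp hx).1)
            (fun y hy => hB'SI' (Finset.mem_sdiff.mp (hB''sub hy)).1) rfl hB''c
          constructor
          · intro z hz
            rcases Finset.mem_union.mp hz with h | h
            · exact hI'S (Finset.mem_sdiff.mp h).1
            · exact hB'S _ (Finset.mem_sdiff.mp (hB''sub h)).1
          · intro w1 hw1 w2 hw2 hne
            have cross : ∀ z1 z2 : Ivl, z1 ∈ I' \ (A' \ D) → z2 ∈ B'' → ¬ z1.meets z2 := by
              intro z1 z2 h1 h2 hm
              obtain ⟨hz1I', hz1n⟩ := Finset.mem_sdiff.mp h1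
              obtain ⟨hz2B', hz2D⟩ := Finset.mem_sdiff.mp (hB''sub h2)
              by_cases hz1A' : z1 ∈ A'
              · have hz1D : z1 ∈ D := by
                  by_contra h
                  exact hz1n (Finset.mem_sdiff.mpr ⟨hz1A', h⟩)
                exact hz2D (hDstep z1 hz1D z2 (Finset.mem_union_right _ hz2B') hm)
              · exact hF3 z2 hz2B' z1 hz1I' hz1A' (meets_symm hm)
            rcases Finset.mem_union.mp hw1 with h1 | h1 <;>
              rcases Finset.mem_union.mp hw2 with h2 | h2
            · exact hI'ind.2 w1 (Finset.mem_sdiff.mp h1).1 w2 (Finset.mem_sdiff.mp h2).1 hne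
            · exact cross w1 w2 h1 h2
            · exact fun hm => cross w2 w1 h2 h1 (meets_symm hm)
            · exact hEind.2 w1 (hB'E (Finset.mem_sdiff.mp (hB''sub h1)).1) w2
                (hB'E (Finset.mem_sdiff.mp (hB''sub h2)).1) hne
    -- final case analysis
    have hpurecount : ∀ Ca ∈ CS1, ∀ Cb ∈ CS1, Ca ≠ Cb → Ca ∩ At = A → False := by
      intro Ca hCa Cb hCb hne hCaA
      have h1 : (Ca ∩ At).card = t := by rw [hCaA, hAcard]
      have h2 := hbig Cb hCb
      have hdis := hdisjA Ca (Finset.mem_filter.mp hCa).1 Cb (Finset.mem_filter.mp hCb).1 hne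
      have h3 : (Ca ∩ At).card + (Cb ∩ At).card ≤ At.card := by
        rw [← Finset.card_union_of_disjoint hdis]
        apply Finset.card_le_card
        intro x hx
        rcases Finset.mem_union.mp hx with h | h
        · exact (Finset.mem_inter.mp h).2
        · exact (Finset.mem_inter.mp h).2
      have hAtble : At.card ≤ t + n := by
        have hsub : At ⊆ A ∪ A' := by
          intro x hx
          by_cases hxA : x ∈ A
          · exact Finset.mem_union_left _ hxA
          · exact Finset.mem_union_right _ (hAt_AA' x hx hxA)
        calc At.card ≤ (A ∪ A').card := Finset.card_le_card hsub
          _ ≤ A.card + A'.card := Finset.card_union_le _ _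
          _ = t + n := by rw [hAcard, hA'c]
      omega
    have hmixed : ∀ C ∈ CS1, ¬ (C ∩ At ⊆ A) → ∃ xb ∈ C, xb ∈ A' ∧ xb ∈ I ∧ xb ∉ A := by
      intro C hC hns
      obtain ⟨xb, hxb1, hxb2⟩ := Finset.not_subset.mp hns
      obtain ⟨hxbC, hxbAt⟩ := Finset.mem_inter.mp hxb1
      exact ⟨xb, hxbC, hAt_AA' xb hxbAt hxb2, hAtI hxbAt, hxb2⟩
    by_cases hp1 : C1 ∩ At ⊆ A
    · by_cases hp2 : C2 ∩ At ⊆ A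
      · have h1 := hpure C1 hC1 hp1
        have h2 := hpure C2 hC2 hp2
        have ha0 : a ⟨0, htpos⟩ ∈ A := haA _
        have m1 : a ⟨0, htpos⟩ ∈ C1 ∩ At := h1.symm ▸ ha0
        have m2 : a ⟨0, htpos⟩ ∈ C2 ∩ At := h2.symm ▸ ha0
        exact hCSdisj C1 hC1CS C2 hC2CS hC12 _ (Finset.mem_inter.mp m1).1
          (Finset.mem_inter.mp m2).1
      · exact hpurecount C1 hC1 C2 hC2 hC12 (hpure C1 hC1 hp1)
    · by_cases hp2 : C2 ∩ At ⊆ A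
      · exact hpurecount C2 hC2 C1 hC1 hC12.symm (hpure C2 hC2 hp2)
      · obtain ⟨x1, hx1C, hx1A', hx1I, hx1A⟩ := hmixed C1 hC1 hp1
        obtain ⟨x2, hx2C, hx2A', hx2I, hx2A⟩ := hmixed C2 hC2 hp2
        obtain ⟨i1, hi1⟩ := hAelt C1 hC1
        obtain ⟨i2, hi2⟩ := hAelt C2 hC2
        have hi1C : a i1 ∈ C1 := hi1
        have hi2C : a i2 ∈ C2 := hi2
        rcases hspan x1 hx1I hx1A with hL1 | hR1 <;> rcases hspan x2 hx2I hx2A with hL2 | hR2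
        · obtain ⟨w1, hw1C, hw1a, hw1b⟩ := hleftpt C1 hC1CS x1 hx1C hL1 i1 hi1C
          obtain ⟨w2, hw2C, hw2a, hw2b⟩ := hleftpt C2 hC2CS x2 hx2C hL2 i2 hi2C
          have hm : w1.meets w2 := meets_of_pt (b 0).l hw1a hw1b hw2a hw2b
          have hw2C1 : w2 ∈ C1 := hCclos C1 hC1CS w1 hw1C w2
            (Relation.ReflTransGen.single ⟨hCsub' C1 hC1CS hw1C, hCsub' C2 hC2CS hw2C, hm⟩)
          exact hCSdisj C1 hC1CS C2 hC2CS hC12 w2 hw2C1 hw2C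
        · exact hanat x1 hx1A' hL1 x2 hx2A' hR2
        · exact hanat x2 hx2A' hL2 x1 hx1A' hR1
        · obtain ⟨w1, hw1C, hw1a, hw1b⟩ := hrightpt C1 hC1CS x1 hx1C hR1 i1 hi1C
          obtain ⟨w2, hw2C, hw2a, hw2b⟩ := hrightpt C2 hC2CS x2 hx2C hR2 i2 hi2C
          have hm : w1.meets w2 := meets_of_pt (b (Fin.last t)).r hw1a hw1b hw2a hw2b
          have hw2C1 : w2 ∈ C1 := hCclos C1 hC1CS w1 hw1C w2
            (Relation.ReflTransGen.single ⟨hCsub' C1 hC1CS hw1C, hCsub' C2 hC2CS hw2C, hm⟩)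
          exact hCSdisj C1 hC1CS C2 hC2CS hC12 w2 hw2C1 hw2C
  exact ⟨⟨hI'ind, hmax'⟩, hnc'⟩
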